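/- For all sufficiently small θ > 0, letting φ be the solution of (1 - tan φ)·cos(φ + θ) = 1 - sin(φ + θ) in (0, π/4), there exists a unique ψ ∈ (0, π/4) satisfying 1 - tan(ψ + θ) = cos(φ + θ) - (1 - tan φ)·sin(φ + θ). -/

import Mathlib

open Real Set

theorem stmt_3 : ∃ θ₀ > (0:ℝ), ∀ θ : ℝ, 0 < θ → θ < θ₀ →
    ∀ φ ∈ Set.Ioo (0:ℝ) (Real.pi / 4),
      (1 - Real.tan φ) * Real.cos (φ + θ) = 1 - Real.sin (φ + θ) →
      ∃! ψ : ℝ, ψ ∈ Set.Ioo (0:ℝ) (Real.pi / 4) ∧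
        1 - Real.tan (ψ + θ) =
          Real.cos (φ + θ) - (1 - Real.tan φ) * Real.sin (φ + θ) := by
  refine ⟨1/10, by norm_num, ?_⟩
  intro θ hθ hθ' φ ⟨hφ0, hφ4⟩ h
  have hπ : (3.14 : ℝ) < Real.pi := by
    have := Real.pi_gt_d6
    linarith
  have hπ' : Real.pi < 3.15 := by
    have := Real.pi_lt_d2
    linarith
  set α := φ + θ with hα
  have hα0 : 0 < α := by positivity
  have hαlt : α < Real.pi / 2 := by
    have : θ < Real.pi / 4 := by linarith
    linarith
  have hcα : 0 < Real.cos α := Real.cos_pos_of_mem_Ioo ⟨by linarith, hαlt⟩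
  have hcφ : 0 < Real.cos φ := Real.cos_pos_of_mem_Ioo ⟨by linarith, by linarith⟩
  -- Step 1: RHS = 1 - tan φ
  have hrhs : Real.cos α - (1 - Real.tan φ) * Real.sin α = 1 - Real.tan φ := by
    have hsq : Real.sin α ^ 2 + Real.cos α ^ 2 = 1 := Real.sin_sq_add_cos_sq α
    have : (Real.cos α - (1 - Real.tan φ) * Real.sin α) * Real.cos α
        = (1 - Real.tan φ) * Real.cos α := by
      linear_combination (-(Real.sin α + 1)) * h + hsq
    exact mul_right_cancel₀ (ne_of_gt hcα) this
  -- Step 2: φ > θ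
  have hφθ : θ < φ := by
    by_contra hc
    push_neg at hc
    have hα2θ : α ≤ 2 * θ := by simp only [hα]; linarith
    have hsφ : 0 < Real.sin φ := Real.sin_pos_of_pos_of_lt_pi hφ0 (by linarith)
    have hcαφ : Real.cos α < Real.cos φ := by
      apply Real.cos_lt_cos_of_nonneg_of_le_pi (le_of_lt hφ0) (by linarith) (by linarith)
    have htan : Real.tan φ * Real.cos α < Real.sin φ := by
      rw [Real.tan_eq_sin_div_cos]
      rw [div_mul_eq_mul_div, div_lt_iff₀ hcφ]
      nlinarith
    have hsinφ : Real.sin φ < φ := Real.sin_lt hφ0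
    have hsinα : α - α ^ 3 / 4 < Real.sin α :=
      by have := Real.sin_gt_sub_cube hα0; nlinarith [pow_pos hα0 3]
    have hcosα : 1 - α ^ 2 / 2 < Real.cos α :=
      Real.one_sub_sq_div_two_lt_cos (ne_of_gt hα0)
    -- h : (1-tanφ) cos α = 1 - sin α, derive contradiction
    have hφα : φ ≤ α / 2 := by simp only [hα]; linarith
    nlinarith [h, sq_nonneg α, hα0.le]
  -- now ψ = φ - θ works
  have hmem : φ - θ ∈ Set.Ioo (0:ℝ) (Real.pi / 4) := ⟨by linarith, by linarith⟩
  refine ⟨φ - θ, ⟨hmem, by rw [sub_add_cancel, hrhs]⟩, ?_⟩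
  rintro ψ ⟨⟨hψ0, hψ4⟩, hψeq⟩
  rw [hrhs] at hψeq
  have htaneq : Real.tan (ψ + θ) = Real.tan φ := by linarith
  have : ψ + θ = φ := by
    apply Real.injOn_tan ⟨by linarith, by linarith⟩ ⟨by linarith, by linarith⟩ htaneq
  linarith
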